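/- Let A, B, C be unit vectors in ℝ³ with A·B > -1, B·C > -1, C·A > -1 and det M(A,B,C) > 0. Then the quantity T = det M(A,B,C)/√(2(1+A·B)(1+B·C)(1+C·A)) satisfies 0 < T ≤ 1. -/
import Mathlib


open Matrix

/-- The 3×3 matrix whose columns are the vectors A, B, C. -/
def colMat (A B C : Fin 3 → ℝ) : Matrix (Fin 3) (Fin 3) ℝ :=
  Matrix.of fun i j => ![A, B, C] j i

theorem tuynman_ratio_mem_Ioc (A B C : Fin 3 → ℝ)
    (hA : A ⬝ᵥ A = 1) (hB : B ⬝ᵥ B = 1) (hC : C ⬝ᵥ C = 1)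
    (hAB : A ⬝ᵥ B > -1) (hBC : B ⬝ᵥ C > -1) (hCA : C ⬝ᵥ A > -1)
    (hdet : (colMat A B C).det > 0) :
    0 < (colMat A B C).det /
          Real.sqrt (2 * (1 + A ⬝ᵥ B) * (1 + B ⬝ᵥ C) * (1 + C ⬝ᵥ A)) ∧
    (colMat A B C).det /
          Real.sqrt (2 * (1 + A ⬝ᵥ B) * (1 + B ⬝ᵥ C) * (1 + C ⬝ᵥ A)) ≤ 1 := by
  have hA' : A 0 ^ 2 + A 1 ^ 2 + A 2 ^ 2 = 1 := by
    simpa [dotProduct, Fin.sum_univ_three, sq] using hA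
  have hB' : B 0 ^ 2 + B 1 ^ 2 + B 2 ^ 2 = 1 := by
    simpa [dotProduct, Fin.sum_univ_three, sq] using hB
  have hC' : C 0 ^ 2 + C 1 ^ 2 + C 2 ^ 2 = 1 := by
    simpa [dotProduct, Fin.sum_univ_three, sq] using hC
  have key : (colMat A B C).det ^ 2 =
      1 + 2 * (A ⬝ᵥ B) * (B ⬝ᵥ C) * (C ⬝ᵥ A)
        - (A ⬝ᵥ B) ^ 2 - (B ⬝ᵥ C) ^ 2 - (C ⬝ᵥ A) ^ 2 := by
    simp only [colMat, Matrix.det_fin_three, dotProduct, Fin.sum_univ_three,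
      Matrix.of_apply, Matrix.cons_val', Matrix.cons_val_zero, Matrix.cons_val_one,
      Matrix.head_cons, Matrix.empty_val', Matrix.cons_val_fin_one, Matrix.head_fin_const,
      Matrix.cons_val_two, Matrix.tail_cons]
    linear_combination
      ((B 0 ^ 2 + B 1 ^ 2 + B 2 ^ 2) * (C 0 ^ 2 + C 1 ^ 2 + C 2 ^ 2)
        - (B 0 * C 0 + B 1 * C 1 + B 2 * C 2) ^ 2) * hA' +
      ((C 0 ^ 2 + C 1 ^ 2 + C 2 ^ 2)
        - (C 0 * A 0 + C 1 * A 1 + C 2 * A 2) ^ 2) * hB' +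
      (1 - (A 0 * B 0 + A 1 * B 1 + A 2 * B 2) ^ 2) * hC'
  set d := (colMat A B C).det
  set s := 2 * (1 + A ⬝ᵥ B) * (1 + B ⬝ᵥ C) * (1 + C ⬝ᵥ A) with hs
  have hspos : 0 < s := by
    have h1 : 0 < 1 + A ⬝ᵥ B := by linarith
    have h2 : 0 < 1 + B ⬝ᵥ C := by linarith
    have h3 : 0 < 1 + C ⬝ᵥ A := by linarith
    positivity
  have hd2 : d ^ 2 ≤ s := by
    nlinarith [sq_nonneg (1 + A ⬝ᵥ B + B ⬝ᵥ C + C ⬝ᵥ A)]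
  have hsqrt : 0 < Real.sqrt s := Real.sqrt_pos.mpr hspos
  constructor
  · positivity
  · rw [div_le_one hsqrt]
    have : d = Real.sqrt (d ^ 2) := (Real.sqrt_sq hdet.le).symm
    rw [this]
    exact Real.sqrt_le_sqrt hd2
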